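/- Let G=(M,E) be a finite tree with |M| ≥ 2 and nonnegative edge weights w. Suppose R : M → ℝ is feasible. Then for every edge e₀ ∈ E one has Σ_{j∈M} R_j ≥ Σ_{e∈E} w_e − w_{e₀}; consequently Σ_{j∈M} R_j ≥ Σ_{e∈E} w_e − min_{e∈E} w_e. -/

import Mathlib

open scoped Classical

/-- Let `G = (M, E)` be a finite tree with `|M| ≥ 2` and nonnegative edge
weights `w`.  Suppose `R : M → ℝ` is feasible, i.e. `R` is nonnegative and for every proper
subset `B ⊊ M` the sum of `R` over `B` is at least the total weight of the edges inside `B`.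
Then for every edge `e₀ ∈ E` one has `∑_{j ∈ M} R j ≥ ∑_{e ∈ E} w e − w e₀`; consequently
`∑_{j ∈ M} R j ≥ ∑_{e ∈ E} w e − min_{e ∈ E} w e`. -/
theorem stmt_0 {V : Type*} [Fintype V] (G : SimpleGraph V) (hT : G.IsTree)
    (hcard : 2 ≤ Fintype.card V)
    (w : Sym2 V → ℝ) (hw : ∀ e ∈ G.edgeFinset, 0 ≤ w e)
    (R : V → ℝ) (hR0 : ∀ j, 0 ≤ R j)
    (hfeas : ∀ B : Finset V, B ⊂ Finset.univ →
      ∑ e ∈ G.edgeFinset.filter (fun e => ∀ v ∈ e, v ∈ B), w e ≤ ∑ j ∈ B, R j) :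
    (∀ e₀ ∈ G.edgeFinset, (∑ e ∈ G.edgeFinset, w e) - w e₀ ≤ ∑ j, R j) ∧
    (∑ e ∈ G.edgeFinset, w e) - sInf (w '' G.edgeSet) ≤ ∑ j, R j := by
  have key : ∀ e₀ ∈ G.edgeFinset, (∑ e ∈ G.edgeFinset, w e) - w e₀ ≤ ∑ j, R j := by
    intro e₀ he₀
    induction e₀ using Sym2.ind with
    | _ a b =>
    rw [SimpleGraph.mem_edgeFinset] at he₀
    have hadj : G.Adj a b := he₀
    have hbridge : G.IsBridge s(a, b) :=
      SimpleGraph.isAcyclic_iff_forall_edge_isBridge.mp hT.2 he₀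
    set G' : SimpleGraph V := G \ SimpleGraph.fromEdgeSet {s(a, b)} with hG'
    have hnr : ¬ G'.Reachable a b := (SimpleGraph.isBridge_iff.mp hbridge)
    set B₁ : Finset V := Finset.univ.filter (fun v => G'.Reachable a v) with hB₁
    have ha : a ∈ B₁ := by simp only [hB₁, Finset.mem_filter, Finset.mem_univ, true_and]; exact SimpleGraph.Reachable.refl a
    have hb : b ∉ B₁ := by simp [hB₁, hnr]
    have hB₁ss : B₁ ⊂ Finset.univ := by
      refine Finset.ssubset_univ_iff.mpr ?_
      intro h; exact hb (h ▸ Finset.mem_univ b)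
    have hB₁css : B₁ᶜ ⊂ Finset.univ := by
      refine Finset.ssubset_univ_iff.mpr ?_
      intro h
      have : a ∈ B₁ᶜ := h ▸ Finset.mem_univ a
      exact (Finset.mem_compl.mp this) ha
    -- adjacency in G' for edges other than s(a,b)
    have hG'adj : ∀ u v : V, G.Adj u v → s(u, v) ≠ s(a, b) → G'.Adj u v := by
      intro u v huv hne
      refine ⟨huv, ?_⟩
      simp only [SimpleGraph.fromEdgeSet_adj, Set.mem_singleton_iff]
      intro h
      exact hne h.1
    have hmove : ∀ u v : V, G.Adj u v → s(u, v) ≠ s(a, b) → (u ∈ B₁ ↔ v ∈ B₁) := by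
      intro u v huv hne
      have hadj' := hG'adj u v huv hne
      simp only [hB₁, Finset.mem_filter, Finset.mem_univ, true_and]
      exact ⟨fun h => h.trans hadj'.reachable, fun h => h.trans hadj'.symm.reachable⟩
    set F₁ := G.edgeFinset.filter (fun e => ∀ v ∈ e, v ∈ B₁) with hF₁
    set F₂ := G.edgeFinset.filter (fun e => ∀ v ∈ e, v ∈ B₁ᶜ) with hF₂
    have hdisj : Disjoint F₁ F₂ := by
      rw [Finset.disjoint_left]
      intro e h1 h2
      induction e using Sym2.ind with
      | _ u v =>
      have hu1 : u ∈ B₁ := (Finset.mem_filter.mp h1).2 u (by simp)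
      have hu2 : u ∈ B₁ᶜ := (Finset.mem_filter.mp h2).2 u (by simp)
      exact (Finset.mem_compl.mp hu2) hu1
    have hunion : F₁ ∪ F₂ = G.edgeFinset.erase s(a, b) := by
      ext e
      induction e using Sym2.ind with
      | _ u v =>
      simp only [Finset.mem_union, hF₁, hF₂, Finset.mem_filter, Finset.mem_erase]
      constructor
      · rintro (⟨he, h⟩ | ⟨he, h⟩)
        · refine ⟨?_, he⟩
          intro hEq
          exact hb (h b (by rw [hEq]; simp))
        · refine ⟨?_, he⟩
          intro hEq
          have := h a (by rw [hEq]; simp)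
          exact (Finset.mem_compl.mp this) ha
      · rintro ⟨hne, he⟩
        have huv : G.Adj u v := SimpleGraph.mem_edgeFinset.mp he
        have hiff := hmove u v huv hne
        by_cases hu : u ∈ B₁
        · left
          refine ⟨he, ?_⟩
          intro x hx
          rcases Sym2.mem_iff.mp hx with rfl | rfl
          · exact hu
          · exact hiff.mp hu
        · right
          refine ⟨he, ?_⟩
          intro x hx
          rcases Sym2.mem_iff.mp hx with rfl | rfl
          · exact Finset.mem_compl.mpr hu
          · exact Finset.mem_compl.mpr (fun h => hu (hiff.mpr h))
    have hsum : (∑ e ∈ G.edgeFinset, w e) - w s(a, b) = ∑ e ∈ F₁, w e + ∑ e ∈ F₂, w e := by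
      rw [← Finset.sum_union hdisj, hunion,
        Finset.sum_erase_eq_sub (SimpleGraph.mem_edgeFinset.mpr he₀)]
    rw [hsum]
    calc ∑ e ∈ F₁, w e + ∑ e ∈ F₂, w e
        ≤ ∑ j ∈ B₁, R j + ∑ j ∈ B₁ᶜ, R j :=
          add_le_add (hfeas B₁ hB₁ss) (hfeas B₁ᶜ hB₁css)
      _ = ∑ j, R j := Finset.sum_add_sum_compl B₁ R
  refine ⟨key, ?_⟩
  -- the edge set is nonempty
  obtain ⟨a, b, hab⟩ := Fintype.exists_pair_of_one_lt_card (α := V) (by omega)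
  obtain ⟨p⟩ := hT.isConnected.preconnected a b
  have hne : G.edgeSet.Nonempty := by
    cases p with
    | nil => exact absurd rfl hab
    | cons h q => exact ⟨_, (SimpleGraph.mem_edgeSet _).mpr h⟩
  have hfin : (w '' G.edgeSet).Finite := ((Set.toFinite G.edgeSet).image w)
  have hmem : sInf (w '' G.edgeSet) ∈ w '' G.edgeSet :=
    (hne.image w).csInf_mem hfin
  obtain ⟨e₀, he₀, heq⟩ := hmem
  rw [← heq]
  exact key e₀ (SimpleGraph.mem_edgeFinset.mpr he₀)
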